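/- There exists a binary sequence that is almost periodic but not eventually strongly almost periodic. Concretely, define a_0 = 1, a_{n+1} = a_n ā_n ā_n a_n a_n (where ā denotes bitwise complement), c_n = a_n a_n a_n a_n, and ω = c_0 c_1 c_2 ⋯; then ω is almost periodic but no suffix of ω is strongly almost periodic. -/

import Mathlib

/-- The factor of `ω` starting at `i` of length `n`. -/
def seg {α : Type*} (ω : ℕ → α) (i n : ℕ) : List α :=
  (List.range n).map (fun k => ω (i + k))

/-- `x` occurs in `ω` at position `i`. -/
def OccursAt {α : Type*} (ω : ℕ → α) (x : List α) (i : ℕ) : Prop :=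
  seg ω i x.length = x

/-- Strongly almost periodic: every factor occurs in every sufficiently long factor. -/
def SAP {α : Type*} (ω : ℕ → α) : Prop :=
  ∀ x : List α, (∃ i, OccursAt ω x i) →
    ∃ l, ∀ j, ∃ i, j ≤ i ∧ i + x.length ≤ j + l ∧ OccursAt ω x i

/-- Almost periodic: every factor occurring infinitely often occurs in every
sufficiently long factor. -/
def AP {α : Type*} (ω : ℕ → α) : Prop :=
  ∀ x : List α, {i | OccursAt ω x i}.Infinite →
    ∃ l, ∀ j, ∃ i, j ≤ i ∧ i + x.length ≤ j + l ∧ OccursAt ω x i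

/-- Eventually strongly almost periodic: some suffix is strongly almost periodic. -/
def EAP {α : Type*} (ω : ℕ → α) : Prop :=
  ∃ n, SAP (fun i => ω (n + i))

/-- `a_0 = 1`, `a_{n+1} = a_n ā_n ā_n a_n a_n`. -/
def aStr : ℕ → List Bool
  | 0 => [true]
  | n + 1 => aStr n ++ (aStr n).map (fun b => !b) ++ (aStr n).map (fun b => !b)
      ++ aStr n ++ aStr n

/-- `c_n = a_n a_n a_n a_n`. -/
def cStr (n : ℕ) : List Bool := aStr n ++ aStr n ++ aStr n ++ aStr n

/-- The prefix `c_0 c_1 ⋯ c_{n-1}` of the sequence `ω`. -/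
def prefW (n : ℕ) : List Bool := ((List.range n).map cStr).flatten

/-- The sequence `ω = c_0 c_1 c_2 ⋯` (note `|prefW (i+1)| = 5^{i+1} - 1 > i`). -/
def omegaAP (i : ℕ) : Bool := (prefW (i + 1)).getD i false

namespace ApNotEap

def nA (n : ℕ) : List Bool := (aStr n).map (fun b => !b)

def blk (k : ℕ) (b : Bool) : List Bool := if b then aStr k else nA k

lemma length_aStr (n : ℕ) : (aStr n).length = 5 ^ n := by
  induction n with
  | zero => rfl
  | succ n ih => simp [aStr, ih, pow_succ]; ring

lemma length_nA (n : ℕ) : (nA n).length = 5 ^ n := by simp [nA, length_aStr]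

lemma length_blk (k : ℕ) (b : Bool) : (blk k b).length = 5 ^ k := by
  cases b <;> simp [blk, length_aStr, length_nA]

lemma map_not_nA (n : ℕ) : (nA n).map (fun b => !b) = aStr n := by
  simp [nA, List.map_map, Function.comp_def]

lemma aStr_succ (n : ℕ) : aStr (n+1) = aStr n ++ nA n ++ nA n ++ aStr n ++ aStr n := rfl

lemma nA_succ (n : ℕ) : nA (n+1) = nA n ++ aStr n ++ aStr n ++ nA n ++ nA n := by
  show (aStr (n+1)).map _ = _
  rw [aStr_succ]
  simp [List.map_append, List.map_map, Function.comp_def, nA]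

lemma blk_succ (k : ℕ) (b : Bool) :
    blk (k+1) b = blk k b ++ blk k (!b) ++ blk k (!b) ++ blk k b ++ blk k b := by
  cases b <;> simp [blk, aStr_succ, nA_succ]

lemma blk_not (k : ℕ) (b : Bool) : blk k (!b) = (blk k b).map (fun x => !x) := by
  cases b <;> simp [blk, nA, map_not_nA, List.map_map, Function.comp_def]

lemma length_cStr (n : ℕ) : (cStr n).length = 4 * 5 ^ n := by
  simp [cStr, length_aStr]; ring

lemma prefW_succ (n : ℕ) : prefW (n+1) = prefW n ++ cStr n := by
  simp [prefW, List.range_succ]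

lemma length_prefW (n : ℕ) : (prefW n).length = 5 ^ n - 1 := by
  induction n with
  | zero => rfl
  | succ n ih =>
    have h5 : 0 < 5 ^ n := pow_pos (by norm_num) n
    rw [prefW_succ, List.length_append, ih, length_cStr, pow_succ]
    omega

lemma prefW_prefix {n m : ℕ} (h : n ≤ m) : prefW n <+: prefW m := by
  induction m with
  | zero => simp_all
  | succ m ih =>
    rcases Nat.lt_or_ge n (m+1) with h' | h'
    · exact (ih (by omega)).trans ⟨cStr m, (prefW_succ m).symm⟩
    · have : n = m + 1 := by omega
      subst this; exact List.prefix_refl _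

lemma getD_prefix {l₁ l₂ : List Bool} (h : l₁ <+: l₂) {i : ℕ} (hi : i < l₁.length) :
    l₂.getD i false = l₁.getD i false := by
  obtain ⟨t, rfl⟩ := h; exact List.getD_append _ _ _ _ hi

lemma omega_getD {n i : ℕ} (hi : i < 5 ^ n - 1) : omegaAP i = (prefW n).getD i false := by
  have h1 : i < 5 ^ (i+1) - 1 := by
    have := Nat.lt_pow_self (n := i+1) (a := 5) (by norm_num); omega
  show (prefW (i+1)).getD i false = _
  rcases le_total (i+1) n with h | h
  · rw [getD_prefix (prefW_prefix h) (by rw [length_prefW]; exact h1)]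
  · rw [getD_prefix (prefW_prefix h) (by rw [length_prefW]; exact hi)]


def applyK (k : ℕ) (w : List Bool) : List Bool := (w.map (blk k)).flatten

lemma applyK_nil (k : ℕ) : applyK k [] = [] := rfl

lemma applyK_cons (k : ℕ) (b : Bool) (w : List Bool) :
    applyK k (b :: w) = blk k b ++ applyK k w := rfl

lemma applyK_append (k : ℕ) (w v : List Bool) :
    applyK k (w ++ v) = applyK k w ++ applyK k v := by
  simp [applyK]

lemma applyK_singleton (k : ℕ) (b : Bool) : applyK k [b] = blk k b := by simp [applyK]

lemma length_applyK (k : ℕ) (w : List Bool) : (applyK k w).length = w.length * 5 ^ k := by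
  induction w with
  | nil => simp [applyK]
  | cons b w ih =>
    rw [applyK_cons, List.length_append, ih, length_blk, List.length_cons]; ring

lemma applyK_map_not (k : ℕ) (w : List Bool) :
    applyK k (w.map (fun b => !b)) = (applyK k w).map (fun b => !b) := by
  induction w with
  | nil => rfl
  | cons b w ih =>
    rw [List.map_cons, applyK_cons, applyK_cons, List.map_append, ← ih, ← blk_not]

lemma aStr_add (k : ℕ) : ∀ j, aStr (k + j) = applyK k (aStr j) ∧ nA (k + j) = applyK k (nA j)
  | 0 => by
    constructor
    · show aStr (k+0) = applyK k [true]
      rw [applyK_singleton]; simp [blk]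
    · show nA (k+0) = applyK k [false]
      rw [applyK_singleton]; simp [blk]
  | j+1 => by
    obtain ⟨h1, h2⟩ := aStr_add k j
    constructor
    · show aStr ((k+j)+1) = _
      rw [aStr_succ, aStr_succ, h1, h2, applyK_append, applyK_append, applyK_append,
        applyK_append]
    · show nA ((k+j)+1) = _
      rw [nA_succ, nA_succ, h1, h2, applyK_append, applyK_append, applyK_append,
        applyK_append]

lemma cStr_add (k j : ℕ) : cStr (k + j) = applyK k (cStr j) := by
  rw [cStr, cStr, (aStr_add k j).1, applyK_append, applyK_append, applyK_append]

lemma prefW_add (k : ℕ) : ∀ j, prefW (k + j) = prefW k ++ applyK k (prefW j)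
  | 0 => by simp [prefW, applyK]
  | j+1 => by
    show prefW ((k+j)+1) = _
    rw [prefW_succ, prefW_add k j, prefW_succ, applyK_append, cStr_add, List.append_assoc]

lemma applyK_getD (k : ℕ) : ∀ (w : List Bool) (m i : ℕ), m < w.length → i < 5 ^ k →
    (applyK k w).getD (m * 5 ^ k + i) false = (blk k (w.getD m false)).getD i false
  | [], m, i, hm, _ => absurd hm (by simp)
  | b :: w, 0, i, hm, hi => by
    rw [applyK_cons, List.getD_append _ _ _ _ (by rw [length_blk]; simpa using hi)]
    simp
  | b :: w, m+1, i, hm, hi => by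
    rw [applyK_cons, List.getD_append_right _ _ _ _ (by rw [length_blk]; nlinarith)]
    have he : (m+1) * 5 ^ k + i - (blk k b).length = m * 5 ^ k + i := by
      rw [length_blk]; have : (m+1) * 5 ^ k = m * 5 ^ k + 5 ^ k := by ring
      omega
    rw [he, applyK_getD k w m i (by simpa using hm) hi]
    simp

lemma length_seg {α : Type*} (ω : ℕ → α) (s n : ℕ) : (seg ω s n).length = n := by simp [seg]

lemma seg_append {α : Type*} (ω : ℕ → α) (s a b : ℕ) :
    seg ω s (a + b) = seg ω s a ++ seg ω (s + a) b := by
  simp [seg, List.range_add, List.map_map, Function.comp_def, Nat.add_assoc]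

lemma seg_block (k m : ℕ) :
    seg omegaAP (5 ^ k - 1 + m * 5 ^ k) (5 ^ k) = blk k (omegaAP m) := by
  have h5 : 0 < 5 ^ k := pow_pos (by norm_num) k
  apply List.ext_getElem (by simp [length_seg, length_blk])
  intro i h1 h2
  have hi : i < 5 ^ k := by simpa [length_seg] using h1
  have hL : (seg omegaAP (5 ^ k - 1 + m * 5 ^ k) (5 ^ k))[i] =
      omegaAP (5 ^ k - 1 + m * 5 ^ k + i) := by simp [seg]
  rw [hL]
  set j := m + 1 with hj
  have h5j : 0 < 5 ^ j := pow_pos (by norm_num) j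
  have hmj : m < 5 ^ j - 1 := by
    have := Nat.lt_pow_self (n := j) (a := 5) (by norm_num); omega
  have e1 : 5 ^ (k + j) = 5 ^ k * 5 ^ j := pow_add 5 k j
  have e2 : m * 5 ^ k + 5 ^ k ≤ (5 ^ j - 1) * 5 ^ k := by
    have h := Nat.mul_le_mul_right (k := 5 ^ k) (show m + 1 ≤ 5 ^ j - 1 by omega)
    calc m * 5 ^ k + 5 ^ k = (m + 1) * 5 ^ k := by ring
    _ ≤ _ := h
  have e3 : (5 ^ j - 1) * 5 ^ k = 5 ^ k * 5 ^ j - 5 ^ k := by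
    rw [Nat.sub_mul, one_mul, mul_comm]
  have hlen : 5 ^ k - 1 + m * 5 ^ k + i < 5 ^ (k + j) - 1 := by omega
  rw [omega_getD hlen, prefW_add k j,
    List.getD_append_right _ _ _ _ (by rw [length_prefW]; omega)]
  have he : 5 ^ k - 1 + m * 5 ^ k + i - (prefW k).length = m * 5 ^ k + i := by
    rw [length_prefW]; omega
  rw [he, applyK_getD k _ m i (by rw [length_prefW]; exact hmj) hi, ← omega_getD hmj,
    List.getD_eq_getElem _ _ (by rw [length_blk]; exact hi)]

lemma seg_sub {α : Type*} {ω : ℕ → α} {s r L L' : ℕ} (h : r + L' ≤ L) :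
    seg ω (s + r) L' = ((seg ω s L).drop r).take L' := by
  have hL : L = r + (L' + (L - r - L')) := by omega
  rw [hL, seg_append, seg_append,
    List.drop_left' (by rw [length_seg]),
    List.take_left' (by rw [length_seg])]

lemma occursAt_append {α : Type*} {ω : ℕ → α} {u v : List α} {p : ℕ}
    (h : OccursAt ω (u ++ v) p) : OccursAt ω u p ∧ OccursAt ω v (p + u.length) := by
  unfold OccursAt at *
  rw [List.length_append, seg_append] at h
  exact List.append_inj h (by rw [length_seg])

lemma occursAt_of_infix {α : Type*} {ω : ℕ → α} {s L : ℕ} {w pre x suf : List α}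
    (hw : seg ω s L = w) (hx : pre ++ x ++ suf = w) : OccursAt ω x (s + pre.length) := by
  subst hw
  have hL : L = pre.length + (x.length + suf.length) := by
    have := congrArg List.length hx
    simp only [List.length_append, length_seg] at this
    omega
  rw [hL, seg_append, seg_append, List.append_assoc] at hx
  obtain ⟨h1, h2⟩ := List.append_inj hx.symm (by rw [length_seg])
  obtain ⟨h3, _⟩ := List.append_inj h2 (by rw [length_seg])
  exact h3

lemma seg_five {α : Type*} (ω : ℕ → α) (m : ℕ) :
    seg ω m 5 = [ω (m+0), ω (m+1), ω (m+2), ω (m+3), ω (m+4)] := rfl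

lemma seg_four {α : Type*} (ω : ℕ → α) (m : ℕ) :
    seg ω m 4 = [ω (m+0), ω (m+1), ω (m+2), ω (m+3)] := rfl

lemma seg_one {α : Type*} (ω : ℕ → α) (m : ℕ) : seg ω m 1 = [ω (m+0)] := rfl

lemma pair_expand {m : ℕ} (hm : 4 ≤ m) :
    ∃ q r, r < 5 ∧ m = 4 + 5 * q + r ∧
      seg omegaAP (4 + 5 * q) 10 = blk 1 (omegaAP q) ++ blk 1 (omegaAP (q+1)) := by
  refine ⟨(m - 4) / 5, (m - 4) % 5, by omega, by omega, ?_⟩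
  set q := (m - 4) / 5
  have b1 := seg_block 1 q
  have b2 := seg_block 1 (q+1)
  norm_num at b1 b2
  rw [show (10:ℕ) = 5 + 5 from rfl, seg_append,
    show 4 + 5 * q = 4 + q * 5 by ring, b1,
    show 4 + q * 5 + 5 = 4 + (q+1) * 5 by ring, b2]

lemma sync1 {b : Bool} {m : ℕ} (hm : 4 ≤ m) (h : OccursAt omegaAP (blk 1 b) m) :
    ∃ q, m = 4 + 5 * q ∧ omegaAP q = b := by
  obtain ⟨q, r, hr, hqr, hpair⟩ := pair_expand hm
  have hx : seg omegaAP m 5 = blk 1 b := by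
    have := h; unfold OccursAt at this
    rwa [length_blk, show (5:ℕ)^1 = 5 from rfl] at this
  rw [show m = (4 + 5 * q) + r by omega, seg_sub (L := 10) (by omega), hpair] at hx
  have key : ∀ (b b1 b2 : Bool), ∀ r < 5,
      ((blk 1 b1 ++ blk 1 b2).drop r).take 5 = blk 1 b → r = 0 ∧ b1 = b := by decide
  obtain ⟨hr0, hb⟩ := key b (omegaAP q) (omegaAP (q+1)) r hr hx
  exact ⟨q, by omega, hb⟩

lemma no1111 {m : ℕ} (hm : 4 ≤ m) : ¬ OccursAt omegaAP [true, true, true, true] m := by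
  intro h
  obtain ⟨q, r, hr, hqr, hpair⟩ := pair_expand hm
  have hx : seg omegaAP m 4 = [true, true, true, true] := h
  rw [show m = (4 + 5 * q) + r by omega, seg_sub (L := 10) (by omega), hpair] at hx
  have key : ∀ (b1 b2 : Bool), ∀ r < 5,
      ((blk 1 b1 ++ blk 1 b2).drop r).take 4 ≠ [true, true, true, true] := by decide
  exact key (omegaAP q) (omegaAP (q+1)) r hr hx

lemma blk_one (b : Bool) : blk 1 b = [b, !b, !b, b, b] := by cases b <;> rfl

lemma blk_zero (b : Bool) : blk 0 b = [b] := by cases b <;> rfl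

lemma sync : ∀ (k : ℕ) {b : Bool} {p : ℕ}, 5 ^ k - 1 ≤ p →
    OccursAt omegaAP (blk k b) p →
    ∃ m, p = 5 ^ k - 1 + m * 5 ^ k ∧ omegaAP m = b
  | 0, b, p, _, h => by
    refine ⟨p, by simp, ?_⟩
    have hx : seg omegaAP p 1 = [b] := by
      have := h; unfold OccursAt at this
      rwa [blk_zero] at this
    rw [seg_one] at hx
    simpa using List.head_eq_of_cons_eq hx
  | (k+1), b, p, hp, h => by
    have h5 : 0 < 5 ^ k := pow_pos (by norm_num) k
    have hsucc : (5:ℕ) ^ (k+1) = 5 ^ k * 5 := pow_succ 5 k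
    have hp' : 5 ^ k - 1 ≤ p := by omega
    rw [blk_succ] at h
    obtain ⟨h', e5⟩ := occursAt_append h
    obtain ⟨h'', e4⟩ := occursAt_append h'
    obtain ⟨h''', e3⟩ := occursAt_append h''
    obtain ⟨e1, e2⟩ := occursAt_append h'''
    obtain ⟨m, hm, hb0⟩ := sync k hp' e1
    have step : ∀ (t : ℕ) (bt : Bool) (pos : ℕ), pos = p + t * 5 ^ k →
        OccursAt omegaAP (blk k bt) pos → omegaAP (m + t) = bt := by
      intro t bt pos hpos ht
      obtain ⟨mt, hmt, hbt⟩ := sync k (by omega) ht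
      have h1 : mt * 5 ^ k = (m + t) * 5 ^ k := by
        have : (m + t) * 5 ^ k = m * 5 ^ k + t * 5 ^ k := by ring
        omega
      have h2 : mt = m + t := Nat.eq_of_mul_eq_mul_right h5 h1
      rwa [← h2]
    have hb1 := step 1 (!b) _ (by simp only [length_blk]; omega) e2
    have hb2 := step 2 (!b) _
      (by simp only [List.length_append, length_blk]; omega) e3
    have hb3 := step 3 b _
      (by simp only [List.length_append, length_blk]; omega) e4
    have hb4 := step 4 b _
      (by simp only [List.length_append, length_blk]; omega) e5
    have hocc : OccursAt omegaAP (blk 1 b) m := by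
      show seg omegaAP m (blk 1 b).length = blk 1 b
      rw [blk_one, show ([b, !b, !b, b, b] : List Bool).length = 5 from rfl, seg_five,
        Nat.add_zero, hb0, hb1, hb2, hb3, hb4]
    have hm4 : 4 ≤ m := by
      by_contra hc
      have : m * 5 ^ k ≤ 3 * 5 ^ k :=
        Nat.mul_le_mul_right (k := 5 ^ k) (by omega)
      omega
    obtain ⟨q, hq, hqb⟩ := sync1 hm4 hocc
    refine ⟨q, ?_, hqb⟩
    have e1' : (4 + 5 * q) * 5 ^ k = 4 * 5 ^ k + 5 * (q * 5 ^ k) := by ring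
    have e2' : q * 5 ^ (k+1) = 5 * (q * 5 ^ k) := by rw [hsucc]; ring
    rw [hq] at hm
    omega

lemma pair_infix (k : ℕ) (b1 b2 c : Bool) :
    (blk k b1 ++ blk k b2) <:+: blk (k+1) c := by
  rw [blk_succ]
  cases b1 <;> cases b2 <;> cases c <;>
    simp only [Bool.not_true, Bool.not_false]
  · exact ⟨blk k false ++ blk k true ++ blk k true, [], by simp [List.append_assoc]⟩
  · exact ⟨blk k true, blk k true ++ blk k true, by simp [List.append_assoc]⟩
  · exact ⟨[], blk k true ++ blk k false ++ blk k false, by simp [List.append_assoc]⟩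
  · exact ⟨blk k true ++ blk k false, blk k true, by simp [List.append_assoc]⟩
  · exact ⟨blk k false ++ blk k true, blk k false, by simp [List.append_assoc]⟩
  · exact ⟨[], blk k false ++ blk k true ++ blk k true, by simp [List.append_assoc]⟩
  · exact ⟨blk k false, blk k false ++ blk k false, by simp [List.append_assoc]⟩
  · exact ⟨blk k true ++ blk k false ++ blk k false, [], by simp [List.append_assoc]⟩

lemma ap : AP omegaAP := by
  intro x hx
  set k := x.length with hk
  have h5 : 0 < 5 ^ k := pow_pos (by norm_num) k
  have hxk : x.length ≤ 5 ^ k := le_of_lt (Nat.lt_pow_self (n := k) (a := 5) (by norm_num))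
  have hQ5 : (5:ℕ) ^ (k+1) = 5 ^ k * 5 := pow_succ 5 k
  have hQpos : 0 < (5:ℕ) ^ (k+1) := pow_pos (by norm_num) _
  refine ⟨3 * 5 ^ (k+1), ?_⟩
  obtain ⟨p, hpS, hp⟩ := Set.Infinite.exists_gt hx (5 ^ k)
  have hpS : OccursAt omegaAP x p := hpS
  set m := (p - (5 ^ k - 1)) / 5 ^ k with hmdef
  set r := (p - (5 ^ k - 1)) % 5 ^ k with hrdef
  have hdm := Nat.div_add_mod (p - (5 ^ k - 1)) (5 ^ k)
  have hrlt : r < 5 ^ k := Nat.mod_lt _ h5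
  have hpe : p = 5 ^ k - 1 + m * 5 ^ k + r := by
    rw [hmdef, hrdef]
    have : 5 ^ k * ((p - (5 ^ k - 1)) / 5 ^ k) = ((p - (5 ^ k - 1)) / 5 ^ k) * 5 ^ k := by
      ring
    omega
  have hpair : seg omegaAP (5 ^ k - 1 + m * 5 ^ k) (5 ^ k + 5 ^ k)
      = blk k (omegaAP m) ++ blk k (omegaAP (m+1)) := by
    rw [seg_append, seg_block]
    have hpos : 5 ^ k - 1 + m * 5 ^ k + 5 ^ k = 5 ^ k - 1 + (m+1) * 5 ^ k := by
      have : (m+1) * 5 ^ k = m * 5 ^ k + 5 ^ k := by ring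
      omega
    rw [hpos, seg_block]
  have hinfix : ∀ c : Bool, x <:+: blk (k+1) c := by
    intro c
    refine List.IsInfix.trans ?_ (pair_infix k (omegaAP m) (omegaAP (m+1)) c)
    have hxe : x = ((blk k (omegaAP m) ++ blk k (omegaAP (m+1))).drop r).take x.length := by
      rw [← hpair, ← seg_sub (by omega), show 5 ^ k - 1 + m * 5 ^ k + r = p from by omega]
      exact hpS.symm
    rw [hxe]
    exact ((List.take_prefix _ _).isInfix).trans ((List.drop_suffix _ _).isInfix)
  intro j
  set Q := (5:ℕ) ^ (k+1) with hQdef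
  set q' := j / Q + 1 with hq'
  have hjq : j < q' * Q := by
    rw [hq']
    exact (Nat.div_lt_iff_lt_mul hQpos).mp (Nat.lt_succ_self _)
  have hjq2 : q' * Q ≤ j + Q := by
    rw [hq', add_mul, one_mul]
    have : (j / Q) * Q ≤ j := Nat.div_mul_le_self j Q
    omega
  obtain ⟨pre, suf, hps⟩ := hinfix (omegaAP q')
  have hblock : seg omegaAP (Q - 1 + q' * Q) Q = blk (k+1) (omegaAP q') :=
    seg_block (k+1) q'
  have hlen : pre.length + x.length ≤ Q := by
    have := congrArg List.length hps
    simp only [List.length_append, length_blk] at this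
    omega
  refine ⟨(Q - 1 + q' * Q) + pre.length, by omega, by omega,
    occursAt_of_infix hblock hps⟩

lemma seg_shift {α : Type*} (ω : ℕ → α) (n i L : ℕ) :
    seg (fun t => ω (n + t)) i L = seg ω (n + i) L := by
  simp [seg, Nat.add_assoc]

lemma occursAt_shift {α : Type*} {ω : ℕ → α} {n : ℕ} {x : List α} {i : ℕ} :
    OccursAt (fun t => ω (n + t)) x i ↔ OccursAt ω x (n + i) := by
  unfold OccursAt
  rw [seg_shift]

lemma omega_small : ∀ i < 4, omegaAP i = true := by
  intro i hi
  rw [omega_getD (n := 1) (by norm_num; omega)]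
  have h : ∀ i < 4, (prefW 1).getD i false = true := by decide
  exact h i hi

lemma blk_true (k : ℕ) : blk k true = aStr k := rfl

lemma occ_cStr (k : ℕ) : OccursAt omegaAP (cStr k) (5 ^ k - 1) := by
  have h5 : 0 < 5 ^ k := pow_pos (by norm_num) k
  have b0 := seg_block k 0
  have b1 := seg_block k 1
  have b2 := seg_block k 2
  have b3 := seg_block k 3
  rw [omega_small 0 (by norm_num), blk_true] at b0
  rw [omega_small 1 (by norm_num), blk_true] at b1
  rw [omega_small 2 (by norm_num), blk_true] at b2
  rw [omega_small 3 (by norm_num), blk_true] at b3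
  rw [show 5 ^ k - 1 + 0 * 5 ^ k = 5 ^ k - 1 by omega] at b0
  show seg omegaAP (5 ^ k - 1) (cStr k).length = cStr k
  rw [length_cStr, show (4:ℕ) * 5 ^ k = 5 ^ k + (5 ^ k + (5 ^ k + 5 ^ k)) by ring,
    seg_append, seg_append, seg_append, b0,
    show 5 ^ k - 1 + 5 ^ k = 5 ^ k - 1 + 1 * 5 ^ k by omega, b1,
    show 5 ^ k - 1 + 1 * 5 ^ k + 5 ^ k = 5 ^ k - 1 + 2 * 5 ^ k by omega, b2,
    show 5 ^ k - 1 + 2 * 5 ^ k + 5 ^ k = 5 ^ k - 1 + 3 * 5 ^ k by omega, b3]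
  simp [cStr, List.append_assoc]

lemma not_eap : ¬ EAP omegaAP := by
  rintro ⟨n, hsap⟩
  set k := n + 1 with hk
  have h5 : 0 < 5 ^ k := pow_pos (by norm_num) k
  have hsucc : (5:ℕ) ^ (k+1) = 5 ^ k * 5 := pow_succ 5 k
  have hkn : n < 5 ^ k - 1 := by
    have := Nat.lt_pow_self (n := k) (a := 5) (by norm_num); omega
  obtain ⟨l, hl⟩ := hsap (cStr k) ⟨5 ^ k - 1 - n, by
    rw [occursAt_shift, show n + (5 ^ k - 1 - n) = 5 ^ k - 1 by omega]
    exact occ_cStr k⟩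
  obtain ⟨i, hji, _, hocc2⟩ := hl (5 ^ (k+1))
  rw [occursAt_shift] at hocc2
  set p := n + i with hpdef
  have hpge : 5 ^ (k+1) ≤ p := by omega
  have hp' : 5 ^ k - 1 ≤ p := by omega
  rw [show cStr k = blk k true ++ blk k true ++ blk k true ++ blk k true from rfl] at hocc2
  obtain ⟨h', e4⟩ := occursAt_append hocc2
  obtain ⟨h'', e3⟩ := occursAt_append h'
  obtain ⟨e1, e2⟩ := occursAt_append h''
  obtain ⟨m, hm, hb0⟩ := sync k hp' e1
  have step : ∀ (t : ℕ) (pos : ℕ), pos = p + t * 5 ^ k →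
      OccursAt omegaAP (blk k true) pos → omegaAP (m + t) = true := by
    intro t pos hpos ht
    obtain ⟨mt, hmt, hbt⟩ := sync k (by omega) ht
    have h1 : mt * 5 ^ k = (m + t) * 5 ^ k := by
      have : (m + t) * 5 ^ k = m * 5 ^ k + t * 5 ^ k := by ring
      omega
    have h2 : mt = m + t := Nat.eq_of_mul_eq_mul_right h5 h1
    rwa [← h2]
  have hb1 := step 1 _ (by simp only [length_blk]; omega) e2
  have hb2 := step 2 _ (by simp only [List.length_append, length_blk]; omega) e3
  have hb3 := step 3 _ (by simp only [List.length_append, length_blk]; omega) e4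
  have hm4 : 4 ≤ m := by
    by_contra hc
    have : m * 5 ^ k ≤ 3 * 5 ^ k := Nat.mul_le_mul_right (k := 5 ^ k) (by omega)
    omega
  have hocc4 : OccursAt omegaAP [true, true, true, true] m := by
    show seg omegaAP m 4 = _
    rw [seg_four, Nat.add_zero, hb0, hb1, hb2, hb3]
  exact no1111 hm4 hocc4

end ApNotEap

/-- There is a binary sequence (namely `ω = c_0 c_1 c_2 ⋯`) that is almost periodic
but not eventually strongly almost periodic. -/
theorem ap_not_eap : AP omegaAP ∧ ¬ EAP omegaAP :=
  ⟨ApNotEap.ap, ApNotEap.not_eap⟩
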